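/- Let σ : ℝ → ℝ be a polynomial, s ∈ ℝ, z ∈ ℝⁿ, and set y = σ(∑_{j∈N} z_j + s), ỹ = σ(s). Let N⁺ = {j : z_j > 0} and N⁻ = {j : z_j ≤ 0}, and assume ∑_{j ∈ N⁻} z_j ≠ 0. Then for every i ∈ N⁻ and every β ∈ ℝ, the LRP-αβ attribution a_i = β · (z_i / ∑_{j∈N⁻} z_j) · (y − ỹ) satisfies a_i = β·[ ∑_{κ ∈ Ω_i} φ(κ) + ∑_{S ⊆ N, |S| > 1, i ∈ S} ∑_{κ ∈ Ω_S} (κ_i / ∑_{j∈N⁻} κ_j) · I(κ) + ∑_{∅ ≠ S ⊆ N⁺} ∑_{κ ∈ Ω_S} (z_i / ∑_{j∈N⁻} z_j) · I(κ) ]. -/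

import Mathlib

open Finset

/-- The Taylor interaction effect `I(κ)` of the one-layer module
`g(u) = σ(∑ⱼ uⱼ + s)` expanded at the baseline `0` and evaluated at `z`:
`I(κ) = (σ^{(|κ|)}(s)/|κ|!) · (|κ|!/∏ⱼ κⱼ!) · ∏ⱼ zⱼ^{κⱼ}`. -/
noncomputable def taylorEffect {n : ℕ} (σ : Polynomial ℝ) (s : ℝ) (z : Fin n → ℝ)
    (κ : Fin n → ℕ) : ℝ :=
  ((Polynomial.derivative^[∑ j, κ j] σ).eval s / ((∑ j, κ j).factorial : ℝ)) *
    ((Nat.multinomial Finset.univ κ : ℕ) : ℝ) * ∏ j, z j ^ κ j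

namespace LRPAux

variable {n : ℕ}

/-- `taylorEffect` rewritten as `σ^{(m)}(s) · ∏ⱼ zⱼ^{κⱼ}/κⱼ!`. -/
lemma te_eq (σ : Polynomial ℝ) (s : ℝ) (z : Fin n → ℝ) (κ : Fin n → ℕ) :
    taylorEffect σ s z κ =
      (Polynomial.derivative^[∑ j, κ j] σ).eval s *
        ∏ j, (z j ^ κ j / ((κ j).factorial : ℝ)) := by
  unfold taylorEffect
  have hspec := Nat.multinomial_spec (Finset.univ : Finset (Fin n)) κ
  have h1 : ((∏ j, (κ j).factorial : ℕ) : ℝ) ≠ 0 := by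
    exact_mod_cast Finset.prod_ne_zero_iff.mpr fun j _ => (κ j).factorial_ne_zero
  have h2 : (((∑ j, κ j).factorial : ℕ) : ℝ) ≠ 0 := by
    exact_mod_cast (∑ j, κ j).factorial_ne_zero
  have hm : ((Nat.multinomial Finset.univ κ : ℕ) : ℝ)
      = (((∑ j, κ j).factorial : ℕ) : ℝ) / ((∏ j, (κ j).factorial : ℕ) : ℝ) := by
    rw [eq_div_iff h1, mul_comm]
    exact_mod_cast congrArg (Nat.cast : ℕ → ℝ) hspec
  rw [hm, Finset.prod_div_distrib]
  push_cast
  field_simp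

lemma te_zero (σ : Polynomial ℝ) (s : ℝ) (z : Fin n → ℝ) (κ : Fin n → ℕ)
    (h : σ.natDegree < ∑ j, κ j) : taylorEffect σ s z κ = 0 := by
  unfold taylorEffect
  rw [Polynomial.iterate_derivative_eq_zero h]
  simp

/-- the big box -/
def kbox (σ : Polynomial ℝ) (n : ℕ) : Finset (Fin n → ℕ) :=
  Fintype.piFinset (fun _ => Finset.range (σ.natDegree + 1))

lemma te_zero_of_not_mem_kbox (σ : Polynomial ℝ) (s : ℝ) (z : Fin n → ℝ) (κ : Fin n → ℕ)
    (h : κ ∉ kbox σ n) : taylorEffect σ s z κ = 0 := by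
  apply te_zero
  simp only [kbox, Fintype.mem_piFinset, mem_range, not_forall, not_lt] at h
  obtain ⟨j, hj⟩ := h
  calc σ.natDegree < σ.natDegree + 1 := Nat.lt_succ_self _
    _ ≤ κ j := hj
    _ ≤ ∑ l, κ l := Finset.single_le_sum (fun l _ => Nat.zero_le _) (mem_univ j)

lemma sum_box (σ : Polynomial ℝ) (s : ℝ) (z : Fin n → ℝ) :
    ∑ κ ∈ kbox σ n, taylorEffect σ s z κ = σ.eval (∑ j, z j + s) := by
  unfold kbox
  set D := σ.natDegree with hD
  set B := (range (D + 1)).biUnion (fun m => piAntidiag (univ : Finset (Fin n)) m) with hB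
  have hBsub : B ⊆ Fintype.piFinset (fun _ : Fin n => Finset.range (D + 1)) := by
    intro κ hκ
    simp only [hB, mem_biUnion, mem_range, mem_piAntidiag] at hκ
    obtain ⟨m, hm, hsum, -⟩ := hκ
    simp only [Fintype.mem_piFinset, mem_range]
    intro j
    calc κ j ≤ ∑ l, κ l := Finset.single_le_sum (fun l _ => Nat.zero_le _) (mem_univ j)
      _ = m := hsum
      _ < D + 1 := hm
  rw [← Finset.sum_subset hBsub ?h0]
  case h0 =>
    intro κ hκ hκB
    apply te_zero
    by_contra hle
    push_neg at hle
    exact hκB (by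
      simp only [hB, mem_biUnion, mem_range]
      exact ⟨∑ j, κ j, Nat.lt_succ_of_le hle, by simp [mem_piAntidiag]⟩)
  rw [hB, Finset.sum_biUnion ?hdisj]
  case hdisj =>
    intro a _ b _ hab
    apply Finset.disjoint_left.mpr
    intro κ hκa hκb
    simp only [mem_piAntidiag] at hκa hκb
    exact hab (hκa.1 ▸ hκb.1)
  have hTay : σ.eval (∑ j, z j + s) = ∑ m ∈ range (D + 1),
      (Polynomial.derivative^[m] σ).eval s / (m.factorial : ℝ) * (∑ j, z j) ^ m := by
    rw [show σ.eval (∑ j, z j + s) = (Polynomial.taylor s σ).eval (∑ j, z j) from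
      (Polynomial.taylor_eval s σ _).symm,
      Polynomial.eval_eq_sum_range'
        (by rw [Polynomial.natDegree_taylor]; exact Nat.lt_succ_self _)]
    refine Finset.sum_congr rfl fun m _ => ?_
    congr 1
    rw [Polynomial.taylor_coeff]
    have h2 : (m.factorial • Polynomial.hasseDeriv m σ) = Polynomial.derivative^[m] σ :=
      congrFun (Polynomial.factorial_smul_hasseDeriv (R := ℝ) m) σ
    rw [eq_div_iff (by exact_mod_cast m.factorial_ne_zero : (m.factorial:ℝ) ≠ 0), ← h2]
    simp [mul_comm]
  rw [hTay]
  refine Finset.sum_congr rfl fun m _ => ?_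
  rw [Finset.sum_pow_eq_sum_piAntidiag, Finset.mul_sum]
  refine Finset.sum_congr rfl fun κ hκ => ?_
  have hsum : ∑ l, κ l = m := by
    simpa [mem_piAntidiag] using (mem_piAntidiag.mp hκ).1
  unfold taylorEffect
  rw [hsum]
  ring

/-- subtract one at `a`, add one at `b`. -/
def shift (a b : Fin n) (κ : Fin n → ℕ) : Fin n → ℕ :=
  Function.update (Function.update κ a (κ a - 1)) b (κ b + 1)

lemma shift_fst (a b : Fin n) (hab : a ≠ b) (κ : Fin n → ℕ) : shift a b κ a = κ a - 1 := by
  rw [shift, Function.update_of_ne hab, Function.update_self]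

lemma shift_snd (a b : Fin n) (κ : Fin n → ℕ) : shift a b κ b = κ b + 1 := by
  rw [shift, Function.update_self]

lemma shift_other (a b : Fin n) (κ : Fin n → ℕ) (l : Fin n) (hla : l ≠ a) (hlb : l ≠ b) :
    shift a b κ l = κ l := by
  rw [shift, Function.update_of_ne hlb, Function.update_of_ne hla]

lemma shift_inv (a b : Fin n) (hab : a ≠ b) (κ : Fin n → ℕ) (hκ : κ a ≠ 0) :
    shift b a (shift a b κ) = κ := by
  funext l
  rcases eq_or_ne l a with h | hla
  · rw [h, shift_snd, shift_fst a b hab]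
    omega
  · rcases eq_or_ne l b with h | hlb
    · rw [h, shift_fst b a hab.symm, shift_snd]
      omega
    · rw [shift_other b a _ l hlb hla, shift_other a b _ l hla hlb]

lemma split3 {M : Type*} [CommMonoid M] (i j : Fin n) (hij : i ≠ j) (g : Fin n → M) :
    ∏ l, g l = g i * g j * ∏ l ∈ (univ.erase j).erase i, g l := by
  rw [← Finset.mul_prod_erase univ g (mem_univ j),
    ← Finset.mul_prod_erase _ g (Finset.mem_erase.mpr ⟨hij, mem_univ i⟩), ← mul_assoc,
    mul_comm (g j) (g i)]

lemma split3A (A : Finset (Fin n)) (i j : Fin n) (hij : i ≠ j) (hiA : i ∈ A) (hjA : j ∈ A)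
    (g : Fin n → ℕ) :
    ∑ l ∈ A, g l = g i + g j + ∑ l ∈ (A.erase j).erase i, g l := by
  rw [← Finset.add_sum_erase A g hjA,
    ← Finset.add_sum_erase _ g (Finset.mem_erase.mpr ⟨hij, hiA⟩)]
  ring

lemma shift_sum (i j : Fin n) (hij : i ≠ j) (κ : Fin n → ℕ) (hκi : κ i ≠ 0)
    (A : Finset (Fin n)) (hiA : i ∈ A) (hjA : j ∈ A) :
    ∑ l ∈ A, shift i j κ l = ∑ l ∈ A, κ l := by
  rw [split3A A i j hij hiA hjA (shift i j κ), split3A A i j hij hiA hjA κ,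
    shift_fst i j hij, shift_snd]
  have h : ∑ l ∈ (A.erase j).erase i, shift i j κ l = ∑ l ∈ (A.erase j).erase i, κ l := by
    refine Finset.sum_congr rfl fun l hl => ?_
    simp only [mem_erase] at hl
    exact shift_other i j κ l hl.1 hl.2.1
  omega

lemma shift_mem (σ : Polynomial ℝ) (z : Fin n → ℝ) (i j : Fin n) (hij : i ≠ j)
    (hi : z i ≤ 0) (hj : z j ≤ 0) (κ : Fin n → ℕ)
    (hκ : κ ∈ (kbox σ n).filter (fun κ =>
      (∑ l ∈ univ.filter (fun l => z l ≤ 0), κ l ≠ 0) ∧ κ i ≠ 0 ∧ ∑ l, κ l ≤ σ.natDegree)) :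
    shift i j κ ∈ (kbox σ n).filter (fun κ =>
      (∑ l ∈ univ.filter (fun l => z l ≤ 0), κ l ≠ 0) ∧ κ j ≠ 0 ∧ ∑ l, κ l ≤ σ.natDegree) := by
  simp only [mem_filter, kbox, Fintype.mem_piFinset, mem_range] at hκ ⊢
  obtain ⟨hbox, hK, hκi, hsum⟩ := hκ
  have hsu : ∑ l, shift i j κ l = ∑ l, κ l :=
    shift_sum i j hij κ hκi univ (mem_univ i) (mem_univ j)
  refine ⟨?_, ?_, ?_, ?_⟩
  · intro l
    calc shift i j κ l ≤ ∑ m, shift i j κ m :=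
          Finset.single_le_sum (fun m _ => Nat.zero_le _) (mem_univ l)
      _ = ∑ m, κ m := hsu
      _ ≤ σ.natDegree := hsum
      _ < σ.natDegree + 1 := Nat.lt_succ_self _
  · rw [shift_sum i j hij κ hκi _ (by simp [hi]) (by simp [hj])]
    exact hK
  · rw [shift_snd]; omega
  · rw [hsu]; exact hsum

set_option maxHeartbeats 1000000 in
lemma exchange (σ : Polynomial ℝ) (s : ℝ) (z : Fin n → ℝ) (i j : Fin n)
    (hi : z i ≤ 0) (hj : z j ≤ 0) :
    ∑ κ ∈ kbox σ n, (if ∑ l ∈ univ.filter (fun l => z l ≤ 0), κ l ≠ 0 then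
        z j * ((κ i : ℝ) / ∑ l ∈ univ.filter (fun l => z l ≤ 0), (κ l : ℝ)) *
          taylorEffect σ s z κ else 0)
    = ∑ κ ∈ kbox σ n, (if ∑ l ∈ univ.filter (fun l => z l ≤ 0), κ l ≠ 0 then
        z i * ((κ j : ℝ) / ∑ l ∈ univ.filter (fun l => z l ≤ 0), (κ l : ℝ)) *
          taylorEffect σ s z κ else 0) := by
  rcases eq_or_ne i j with rfl | hij
  · rfl
  set Nneg := univ.filter (fun l => z l ≤ 0) with hNneg
  have hiN : i ∈ Nneg := by simp [hNneg, hi]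
  have hjN : j ∈ Nneg := by simp [hNneg, hj]
  have hrestrict : ∀ (a b : Fin n),
      ∑ κ ∈ kbox σ n, (if ∑ l ∈ Nneg, κ l ≠ 0 then
        z b * ((κ a : ℝ) / ∑ l ∈ Nneg, (κ l : ℝ)) * taylorEffect σ s z κ else 0)
      = ∑ κ ∈ (kbox σ n).filter (fun κ =>
            (∑ l ∈ Nneg, κ l ≠ 0) ∧ κ a ≠ 0 ∧ ∑ l, κ l ≤ σ.natDegree),
          (if ∑ l ∈ Nneg, κ l ≠ 0 then
        z b * ((κ a : ℝ) / ∑ l ∈ Nneg, (κ l : ℝ)) * taylorEffect σ s z κ else 0) := by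
    intro a b
    refine (Finset.sum_subset (Finset.filter_subset _ _) ?_).symm
    intro κ hκ hκV
    simp only [mem_filter, hκ, true_and, not_and_or, not_not, not_le] at hκV
    rcases hκV with h | h | h
    · rw [if_neg (by simpa using h)]
    · split
      · rw [h]; simp
      · rfl
    · split
      · rw [te_zero σ s z κ h, mul_zero]
      · rfl
  rw [hrestrict i j, hrestrict j i]
  refine Finset.sum_nbij' (fun κ => shift i j κ) (fun κ => shift j i κ)
    (fun κ hκ => shift_mem σ z i j hij hi hj κ hκ)
    (fun κ hκ => shift_mem σ z j i hij.symm hj hi κ hκ)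
    (fun κ hκ => by
      simp only [mem_filter] at hκ
      exact shift_inv i j hij κ hκ.2.2.1)
    (fun κ hκ => by
      simp only [mem_filter] at hκ
      exact shift_inv j i hij.symm κ hκ.2.2.1)
    ?_
  intro κ hκ
  simp only [mem_filter, kbox, Fintype.mem_piFinset, mem_range] at hκ
  obtain ⟨hbox, hK, hκi, hsum⟩ := hκ
  have hκi1 : 1 ≤ κ i := Nat.one_le_iff_ne_zero.mpr hκi
  have hsu : ∑ l, shift i j κ l = ∑ l, κ l :=
    shift_sum i j hij κ hκi univ (mem_univ i) (mem_univ j)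
  have hKφ : ∑ l ∈ Nneg, shift i j κ l = ∑ l ∈ Nneg, κ l :=
    shift_sum i j hij κ hκi Nneg hiN hjN
  have hcast : (∑ l ∈ Nneg, (shift i j κ l : ℝ)) = ∑ l ∈ Nneg, (κ l : ℝ) := by
    exact_mod_cast congrArg (Nat.cast : ℕ → ℝ) hKφ
  rw [if_pos hK, if_pos (by rw [hKφ]; exact hK)]
  rw [te_eq, te_eq, hsu, hcast, shift_snd]
  rw [split3 i j hij (fun l => z l ^ κ l / ((κ l).factorial : ℝ)),
      split3 i j hij (fun l => z l ^ shift i j κ l / ((shift i j κ l).factorial : ℝ))]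
  have hrest : ∏ l ∈ (univ.erase j).erase i,
        (z l ^ shift i j κ l / ((shift i j κ l).factorial : ℝ))
      = ∏ l ∈ (univ.erase j).erase i, (z l ^ κ l / ((κ l).factorial : ℝ)) := by
    refine Finset.prod_congr rfl fun l hl => ?_
    simp only [mem_erase] at hl
    rw [shift_other i j κ l hl.1 hl.2.1]
  rw [hrest, shift_fst i j hij, shift_snd]
  have hpi : z i ^ κ i = z i ^ (κ i - 1) * z i := by
    conv_lhs => rw [show κ i = (κ i - 1) + 1 by omega]
    rw [pow_succ]
  have hfi : ((κ i).factorial : ℝ) = (κ i : ℝ) * ((κ i - 1).factorial : ℝ) := by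
    exact_mod_cast congrArg (Nat.cast : ℕ → ℝ) (Nat.mul_factorial_pred (by omega)).symm
  have hpj : z j ^ (κ j + 1) = z j ^ κ j * z j := pow_succ _ _
  have hfj : (((κ j + 1)).factorial : ℝ) = ((κ j : ℝ) + 1) * ((κ j).factorial : ℝ) := by
    push_cast [Nat.factorial_succ]
    ring
  have h1 : ((κ i - 1).factorial : ℝ) ≠ 0 := by exact_mod_cast (κ i - 1).factorial_ne_zero
  have h2 : ((κ j).factorial : ℝ) ≠ 0 := by exact_mod_cast (κ j).factorial_ne_zero
  have h3 : (κ i : ℝ) ≠ 0 := by exact_mod_cast hκi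
  have h4 : ((κ j : ℝ) + 1) ≠ 0 := by positivity
  have h5 : (∏ x ∈ (univ.erase j).erase i, ((κ x).factorial : ℝ)) ≠ 0 :=
    Finset.prod_ne_zero_iff.mpr fun x _ => by exact_mod_cast (κ x).factorial_ne_zero
  have h6 : (∑ l ∈ Nneg, (κ l : ℝ)) ≠ 0 := by
    have : (0:ℝ) < ∑ l ∈ Nneg, (κ l : ℝ) := by
      have := Nat.pos_of_ne_zero hK
      exact_mod_cast this
    linarith
  rw [hpi, hfi, hpj, hfj]
  push_cast
  field_simp


lemma te_point_zero (σ : Polynomial ℝ) (s : ℝ) (z : Fin n → ℝ) :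
    taylorEffect σ s z 0 = σ.eval s := by
  unfold taylorEffect
  simp [Nat.multinomial]

end LRPAux

theorem lrp_alpha_beta_neg {n : ℕ} (hn : 1 ≤ n) (σ : Polynomial ℝ) (s : ℝ)
    (z : Fin n → ℝ)
    (hNm : ∑ j ∈ univ.filter (fun j => z j ≤ 0), z j ≠ 0)
    (i : Fin n) (hi : z i ≤ 0) (β : ℝ) :
    β * (z i / ∑ j ∈ univ.filter (fun j => z j ≤ 0), z j) *
        (σ.eval (∑ j, z j + s) - σ.eval s)
      = β * (
          (∑' κ : Fin n → ℕ,
              if univ.filter (fun j => κ j ≠ 0) = {i} then taylorEffect σ s z κ else 0)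
        + (∑ S ∈ (univ : Finset (Fin n)).powerset.filter (fun S => 1 < S.card ∧ i ∈ S),
            ∑' κ : Fin n → ℕ,
              if univ.filter (fun j => κ j ≠ 0) = S then
                ((κ i : ℝ) / ∑ j ∈ univ.filter (fun j => z j ≤ 0), (κ j : ℝ)) *
                  taylorEffect σ s z κ
              else 0)
        + (∑ S ∈ (univ.filter (fun j => 0 < z j)).powerset.filter (fun S => S.Nonempty),
            ∑' κ : Fin n → ℕ,
              if univ.filter (fun j => κ j ≠ 0) = S then
                (z i / ∑ j ∈ univ.filter (fun j => z j ≤ 0), z j) *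
                  taylorEffect σ s z κ
              else 0)) := by
  classical
  set T := LRPAux.kbox σ n with hT
  set Nneg := univ.filter (fun j => z j ≤ 0) with hNneg
  set A := (univ : Finset (Fin n)).powerset.filter (fun S => 1 < S.card ∧ i ∈ S) with hA
  set B := (univ.filter (fun j => 0 < z j)).powerset.filter (fun S => S.Nonempty) with hB
  have hiN : i ∈ Nneg := by simp [hNneg, hi]
  -- convert the tsums to finite sums over the box `T`
  have hconv1 : (∑' κ : Fin n → ℕ,
        if univ.filter (fun j => κ j ≠ 0) = {i} then taylorEffect σ s z κ else 0)
      = ∑ κ ∈ T, (if univ.filter (fun j => κ j ≠ 0) = {i} then taylorEffect σ s z κ else 0) := by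
    refine tsum_eq_sum ?_
    intro κ hκ
    rw [LRPAux.te_zero_of_not_mem_kbox σ s z κ hκ]
    simp
  have hconv2 : ∀ S : Finset (Fin n),
      (∑' κ : Fin n → ℕ, if univ.filter (fun j => κ j ≠ 0) = S then
          ((κ i : ℝ) / ∑ j ∈ Nneg, (κ j : ℝ)) * taylorEffect σ s z κ else 0)
      = ∑ κ ∈ T, (if univ.filter (fun j => κ j ≠ 0) = S then
          ((κ i : ℝ) / ∑ j ∈ Nneg, (κ j : ℝ)) * taylorEffect σ s z κ else 0) := by
    intro S
    refine tsum_eq_sum ?_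
    intro κ hκ
    rw [LRPAux.te_zero_of_not_mem_kbox σ s z κ hκ]
    simp
  have hconv3 : ∀ S : Finset (Fin n),
      (∑' κ : Fin n → ℕ, if univ.filter (fun j => κ j ≠ 0) = S then
          (z i / ∑ j ∈ Nneg, z j) * taylorEffect σ s z κ else 0)
      = ∑ κ ∈ T, (if univ.filter (fun j => κ j ≠ 0) = S then
          (z i / ∑ j ∈ Nneg, z j) * taylorEffect σ s z κ else 0) := by
    intro S
    refine tsum_eq_sum ?_
    intro κ hκ
    rw [LRPAux.te_zero_of_not_mem_kbox σ s z κ hκ]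
    simp
  rw [hconv1]
  simp only [hconv2, hconv3]
  -- swap the order of summation and collapse the `S` sums
  have hswap2 : (∑ S ∈ A, ∑ κ ∈ T, (if univ.filter (fun j => κ j ≠ 0) = S then
          ((κ i : ℝ) / ∑ j ∈ Nneg, (κ j : ℝ)) * taylorEffect σ s z κ else 0))
      = ∑ κ ∈ T, (if univ.filter (fun j => κ j ≠ 0) ∈ A then
          ((κ i : ℝ) / ∑ j ∈ Nneg, (κ j : ℝ)) * taylorEffect σ s z κ else 0) := by
    rw [Finset.sum_comm]
    refine Finset.sum_congr rfl fun κ _ => ?_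
    exact Finset.sum_ite_eq A (univ.filter (fun j => κ j ≠ 0))
      (fun _ => ((κ i : ℝ) / ∑ j ∈ Nneg, (κ j : ℝ)) * taylorEffect σ s z κ)
  have hswap3 : (∑ S ∈ B, ∑ κ ∈ T, (if univ.filter (fun j => κ j ≠ 0) = S then
          (z i / ∑ j ∈ Nneg, z j) * taylorEffect σ s z κ else 0))
      = ∑ κ ∈ T, (if univ.filter (fun j => κ j ≠ 0) ∈ B then
          (z i / ∑ j ∈ Nneg, z j) * taylorEffect σ s z κ else 0) := by
    rw [Finset.sum_comm]
    refine Finset.sum_congr rfl fun κ _ => ?_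
    exact Finset.sum_ite_eq B (univ.filter (fun j => κ j ≠ 0))
      (fun _ => (z i / ∑ j ∈ Nneg, z j) * taylorEffect σ s z κ)
  rw [hswap2, hswap3, ← Finset.sum_add_distrib, ← Finset.sum_add_distrib]
  -- pointwise rewriting of the weights
  have hpoint : ∀ κ : Fin n → ℕ,
      (if univ.filter (fun j => κ j ≠ 0) = {i} then taylorEffect σ s z κ else 0)
      + (if univ.filter (fun j => κ j ≠ 0) ∈ A then
          ((κ i : ℝ) / ∑ j ∈ Nneg, (κ j : ℝ)) * taylorEffect σ s z κ else 0)
      + (if univ.filter (fun j => κ j ≠ 0) ∈ B then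
          (z i / ∑ j ∈ Nneg, z j) * taylorEffect σ s z κ else 0)
      = (if ∑ l ∈ Nneg, κ l ≠ 0 then
          ((κ i : ℝ) / ∑ j ∈ Nneg, (κ j : ℝ)) * taylorEffect σ s z κ else 0)
      + (if (∑ l ∈ Nneg, κ l = 0 ∧ (univ.filter (fun j => κ j ≠ 0)).Nonempty) then
          (z i / ∑ j ∈ Nneg, z j) * taylorEffect σ s z κ else 0) := by
    intro κ
    have hKi : κ i ≤ ∑ l ∈ Nneg, κ l :=
      Finset.single_le_sum (fun l _ => Nat.zero_le _) hiN
    have hmemA : (univ.filter (fun j => κ j ≠ 0) ∈ A)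
        ↔ (1 < (univ.filter (fun j => κ j ≠ 0)).card
            ∧ i ∈ univ.filter (fun j => κ j ≠ 0)) := by
      simp [hA]
    have hmemB : (univ.filter (fun j => κ j ≠ 0) ∈ B)
        ↔ ((univ.filter (fun j => κ j ≠ 0)) ⊆ univ.filter (fun j => 0 < z j)
            ∧ (univ.filter (fun j => κ j ≠ 0)).Nonempty) := by
      simp [hB]
    by_cases hK : ∑ l ∈ Nneg, κ l = 0
    · have hκi : κ i = 0 := by omega
      have hiSupp : i ∉ univ.filter (fun j => κ j ≠ 0) := by simp [hκi]
      have hzero : ∀ l ∈ Nneg, κ l = 0 := Finset.sum_eq_zero_iff.mp hK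
      have hsub : (univ.filter (fun j => κ j ≠ 0)) ⊆ univ.filter (fun j => 0 < z j) := by
        intro l hl
        simp only [mem_filter, mem_univ, true_and] at hl ⊢
        by_contra hzl
        push_neg at hzl
        exact hl (hzero l (by simp [hNneg, hzl]))
      rw [if_neg (fun h => hiSupp (by rw [h]; exact Finset.mem_singleton_self i)),
        if_neg (fun h => hiSupp ((hmemA.mp h).2)),
        if_neg (not_not.mpr hK)]
      by_cases hNE : (univ.filter (fun j => κ j ≠ 0)).Nonempty
      · rw [if_pos (hmemB.mpr ⟨hsub, hNE⟩), if_pos ⟨hK, hNE⟩]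
        ring
      · rw [if_neg (fun h => hNE (hmemB.mp h).2), if_neg (fun h => hNE h.2)]
        ring
    · obtain ⟨l₀, hl₀N, hl₀⟩ : ∃ l ∈ Nneg, κ l ≠ 0 := by
        by_contra h
        push_neg at h
        exact hK (Finset.sum_eq_zero h)
      have hzl₀ : z l₀ ≤ 0 := by
        rw [hNneg] at hl₀N
        exact (Finset.mem_filter.mp hl₀N).2
      have hBneg : univ.filter (fun j => κ j ≠ 0) ∉ B := by
        intro h
        have hsub := (hmemB.mp h).1
        have hmem : l₀ ∈ univ.filter (fun j => κ j ≠ 0) := by simp [hl₀]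
        have := hsub hmem
        simp only [mem_filter, mem_univ, true_and] at this
        linarith
      rw [if_neg hBneg, if_pos hK,
        if_neg (show ¬(∑ l ∈ Nneg, κ l = 0 ∧ (univ.filter (fun j => κ j ≠ 0)).Nonempty)
          from fun h => hK h.1), add_zero, add_zero]
      by_cases hκi : κ i = 0
      · have hiSupp : i ∉ univ.filter (fun j => κ j ≠ 0) := by simp [hκi]
        rw [if_neg (fun h => hiSupp (by rw [h]; exact Finset.mem_singleton_self i)),
          if_neg (fun h => hiSupp ((hmemA.mp h).2))]
        rw [show ((κ i : ℝ)) = 0 by exact_mod_cast hκi, zero_div, zero_mul]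
        norm_num
      · have hiSupp : i ∈ univ.filter (fun j => κ j ≠ 0) := by simp [hκi]
        by_cases hs : univ.filter (fun j => κ j ≠ 0) = {i}
        · rw [if_pos hs, if_neg (by rw [hmemA, hs]; simp)]
          have hKr : (∑ j ∈ Nneg, (κ j : ℝ)) = (κ i : ℝ) := by
            refine Finset.sum_eq_single_of_mem i hiN ?_
            intro b hb hbne
            have hb' : b ∉ univ.filter (fun j => κ j ≠ 0) := by rw [hs]; simp [hbne]
            simp only [mem_filter, mem_univ, true_and, not_not] at hb'
            simp [hb']
          rw [add_zero, hKr, div_self (by exact_mod_cast hκi), one_mul]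
        · have hcard : 1 < (univ.filter (fun j => κ j ≠ 0)).card := by
            by_contra hle
            push_neg at hle
            have hpos : 0 < (univ.filter (fun j => κ j ≠ 0)).card :=
              Finset.card_pos.mpr ⟨i, hiSupp⟩
            have hc1 : (univ.filter (fun j => κ j ≠ 0)).card = 1 := by omega
            obtain ⟨a, ha⟩ := Finset.card_eq_one.mp hc1
            apply hs
            rw [ha]
            have : i ∈ ({a} : Finset (Fin n)) := ha ▸ hiSupp
            rw [Finset.mem_singleton] at this
            rw [this]
          rw [if_neg hs, if_pos (hmemA.mpr ⟨hcard, hiSupp⟩), zero_add]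
  rw [Finset.sum_congr rfl (fun κ _ => hpoint κ), Finset.sum_add_distrib]
  -- the first piece, via the exchange argument
  have hS1 : ∑ κ ∈ T, (if ∑ l ∈ Nneg, κ l ≠ 0 then
        ((κ i : ℝ) / ∑ j ∈ Nneg, (κ j : ℝ)) * taylorEffect σ s z κ else 0)
      = (z i / ∑ j ∈ Nneg, z j) * ∑ κ ∈ T, (if ∑ l ∈ Nneg, κ l ≠ 0 then
          taylorEffect σ s z κ else 0) := by
    have key : (∑ j ∈ Nneg, z j) * (∑ κ ∈ T, (if ∑ l ∈ Nneg, κ l ≠ 0 then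
          ((κ i : ℝ) / ∑ j ∈ Nneg, (κ j : ℝ)) * taylorEffect σ s z κ else 0))
        = z i * ∑ κ ∈ T, (if ∑ l ∈ Nneg, κ l ≠ 0 then taylorEffect σ s z κ else 0) := by
      rw [Finset.sum_mul]
      have step : ∀ j ∈ Nneg, z j * (∑ κ ∈ T, (if ∑ l ∈ Nneg, κ l ≠ 0 then
            ((κ i : ℝ) / ∑ j ∈ Nneg, (κ j : ℝ)) * taylorEffect σ s z κ else 0))
          = ∑ κ ∈ T, (if ∑ l ∈ Nneg, κ l ≠ 0 then
              z i * ((κ j : ℝ) / ∑ l ∈ Nneg, (κ l : ℝ)) * taylorEffect σ s z κ else 0) := by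
        intro j hj
        have hzj : z j ≤ 0 := by
          rw [hNneg] at hj
          exact (Finset.mem_filter.mp hj).2
        rw [Finset.mul_sum]
        rw [show (∑ κ ∈ T, z j * (if ∑ l ∈ Nneg, κ l ≠ 0 then
              ((κ i : ℝ) / ∑ j ∈ Nneg, (κ j : ℝ)) * taylorEffect σ s z κ else 0))
            = ∑ κ ∈ T, (if ∑ l ∈ Nneg, κ l ≠ 0 then
              z j * ((κ i : ℝ) / ∑ l ∈ Nneg, (κ l : ℝ)) * taylorEffect σ s z κ else 0) from
          Finset.sum_congr rfl fun κ _ => by split_ifs with h <;> ring]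
        exact LRPAux.exchange σ s z i j hi hzj
      rw [Finset.sum_congr rfl step, Finset.sum_comm, Finset.mul_sum]
      refine Finset.sum_congr rfl fun κ _ => ?_
      by_cases hK : ∑ l ∈ Nneg, κ l = 0
      · simp [hK]
      · rw [if_pos hK]
        have hKr0 : (∑ l ∈ Nneg, (κ l : ℝ)) ≠ 0 := by
          have hpos : (0 : ℝ) < ∑ l ∈ Nneg, (κ l : ℝ) := by
            exact_mod_cast Nat.pos_of_ne_zero hK
          linarith
        calc ∑ j ∈ Nneg, (if ∑ l ∈ Nneg, κ l ≠ 0 then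
              z i * ((κ j : ℝ) / ∑ l ∈ Nneg, (κ l : ℝ)) * taylorEffect σ s z κ else 0)
            = ∑ j ∈ Nneg, z i * ((κ j : ℝ) / ∑ l ∈ Nneg, (κ l : ℝ)) *
                taylorEffect σ s z κ := by
              refine Finset.sum_congr rfl fun j _ => ?_
              rw [if_pos hK]
          _ = (z i * taylorEffect σ s z κ / (∑ l ∈ Nneg, (κ l : ℝ))) *
                ∑ j ∈ Nneg, (κ j : ℝ) := by
              rw [Finset.mul_sum]
              exact Finset.sum_congr rfl fun j _ => by ring
          _ = z i * taylorEffect σ s z κ := by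
              rw [div_mul_cancel₀ _ hKr0]
    rw [div_mul_eq_mul_div, eq_div_iff hNm, mul_comm]
    exact key
  -- the second piece
  have hS2 : ∑ κ ∈ T, (if (∑ l ∈ Nneg, κ l = 0 ∧ (univ.filter (fun j => κ j ≠ 0)).Nonempty) then
        (z i / ∑ j ∈ Nneg, z j) * taylorEffect σ s z κ else 0)
      = (z i / ∑ j ∈ Nneg, z j) * ∑ κ ∈ T,
          (if (∑ l ∈ Nneg, κ l = 0 ∧ (univ.filter (fun j => κ j ≠ 0)).Nonempty) then
            taylorEffect σ s z κ else 0) := by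
    rw [Finset.mul_sum]
    refine Finset.sum_congr rfl fun κ _ => ?_
    split_ifs with h
    · rfl
    · exact (mul_zero _).symm
  rw [hS1, hS2, ← mul_add]
  -- merge the two indicator sums into `y - ỹ`
  have h0T : (0 : Fin n → ℕ) ∈ T := by
    rw [hT]
    simp [LRPAux.kbox, Fintype.mem_piFinset]
  have hmerge : (∑ κ ∈ T, (if ∑ l ∈ Nneg, κ l ≠ 0 then taylorEffect σ s z κ else 0))
      + (∑ κ ∈ T, (if (∑ l ∈ Nneg, κ l = 0 ∧ (univ.filter (fun j => κ j ≠ 0)).Nonempty) then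
          taylorEffect σ s z κ else 0))
      = σ.eval (∑ j, z j + s) - σ.eval s := by
    rw [← Finset.sum_add_distrib]
    have hpt : ∀ κ : Fin n → ℕ,
        (if ∑ l ∈ Nneg, κ l ≠ 0 then taylorEffect σ s z κ else 0)
        + (if (∑ l ∈ Nneg, κ l = 0 ∧ (univ.filter (fun j => κ j ≠ 0)).Nonempty) then
            taylorEffect σ s z κ else 0)
        = taylorEffect σ s z κ - (if κ = 0 then taylorEffect σ s z κ else 0) := by
      intro κ
      by_cases h0 : κ = (0 : Fin n → ℕ)
      · subst h0
        simp
      · have hne : (univ.filter (fun j => κ j ≠ 0)).Nonempty := by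
          rcases Function.ne_iff.mp h0 with ⟨l, hl⟩
          exact ⟨l, by simpa using hl⟩
        rw [if_neg h0, sub_zero]
        by_cases hK : ∑ l ∈ Nneg, κ l = 0
        · rw [if_neg (not_not.mpr hK), if_pos ⟨hK, hne⟩, zero_add]
        · rw [if_pos hK, if_neg (fun h => hK h.1), add_zero]
    rw [Finset.sum_congr rfl (fun κ _ => hpt κ), Finset.sum_sub_distrib]
    rw [show ∑ κ ∈ T, taylorEffect σ s z κ = σ.eval (∑ j, z j + s) from
      LRPAux.sum_box σ s z]
    rw [Finset.sum_ite_eq' T (0 : Fin n → ℕ) (fun κ => taylorEffect σ s z κ), if_pos h0T,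
      LRPAux.te_point_zero]
  rw [hmerge]
  ring
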